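/- Let ω ∈ ℕ and let C be a level-k dyadic cell of the grid {0,…,2^ω−1}² with corner (a,b). Then for every grid point p ∈ {0,…,2^ω−1}², p ∈ C if and only if morton_ω(a,b) ≤ morton_ω(p) < morton_ω(a,b) + 4^k. In other words, the set of Morton codes of the points of any dyadic cell is exactly a contiguous interval of 4^k consecutive integers. -/

import Mathlib

/-- The Morton (Z-order) encoding of a pair of `ω`-bit numbers, obtained by
interleaving binary digits: `morton ω x y = Σ_{i<ω} (bitᵢ(x)·2^{2i+1} + bitᵢ(y)·2^{2i})`. -/
def morton (ω : ℕ) (x y : ℕ) : ℕ :=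
  ∑ i ∈ Finset.range ω,
    ((Nat.testBit x i).toNat * 2 ^ (2 * i + 1) + (Nat.testBit y i).toNat * 2 ^ (2 * i))

/-- Let `C` be a level-`k` dyadic cell of the grid `{0,…,2^ω−1}²` with corner `(a,b)`.
Then for every grid point `p` of the grid, `p ∈ C` if and only if
`morton ω a b ≤ morton ω p < morton ω a b + 4^k`: the Morton codes of the points of
any dyadic cell form a contiguous interval of `4^k` consecutive integers. -/

lemma morton_zero (x y : ℕ) : morton 0 x y = 0 := by simp [morton]

lemma morton_zero' (n : ℕ) : morton n 0 0 = 0 := by simp [morton]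

lemma morton_succ (n x y : ℕ) :
    morton (n+1) x y = 2 * (x % 2) + y % 2 + 4 * morton n (x / 2) (y / 2) := by
  rw [morton, Finset.sum_range_succ', add_comm]
  congr 1
  · rw [Nat.testBit_zero, Nat.testBit_zero]
    rcases Nat.mod_two_eq_zero_or_one x with h | h <;>
      rcases Nat.mod_two_eq_zero_or_one y with h' | h' <;> simp [h, h']
  · rw [morton, Finset.mul_sum]
    apply Finset.sum_congr rfl
    intro i _
    rw [Nat.testBit_succ, Nat.testBit_succ]
    have h1 : 2 * (i + 1) + 1 = (2 * i + 1) + 2 := by ring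
    have h2 : 2 * (i + 1) = (2 * i) + 2 := by ring
    rw [h1, h2, pow_add, pow_add]
    ring

lemma morton_lt (n x y : ℕ) : morton n x y < 4 ^ n := by
  induction n generalizing x y with
  | zero => simp [morton_zero, morton_zero']
  | succ n ih =>
    rw [morton_succ, pow_succ]
    have := ih (x / 2) (y / 2)
    have hx := Nat.mod_lt x (by norm_num : (0:ℕ) < 2)
    have hy := Nat.mod_lt y (by norm_num : (0:ℕ) < 2)
    omega

lemma morton_inj {n x y x' y' : ℕ} (hx : x < 2 ^ n) (hy : y < 2 ^ n)
    (hx' : x' < 2 ^ n) (hy' : y' < 2 ^ n)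
    (h : morton n x y = morton n x' y') : x = x' ∧ y = y' := by
  induction n generalizing x y x' y' with
  | zero => simp at hx hy hx' hy'; omega
  | succ n ih =>
    rw [morton_succ, morton_succ] at h
    have hm1 := Nat.mod_lt x (by norm_num : (0:ℕ) < 2)
    have hm2 := Nat.mod_lt y (by norm_num : (0:ℕ) < 2)
    have hm3 := Nat.mod_lt x' (by norm_num : (0:ℕ) < 2)
    have hm4 := Nat.mod_lt y' (by norm_num : (0:ℕ) < 2)
    have heq : morton n (x/2) (y/2) = morton n (x'/2) (y'/2) := by omega
    have hb : x / 2 < 2 ^ n := by omega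
    have hb2 : y / 2 < 2 ^ n := by omega
    have hb3 : x' / 2 < 2 ^ n := by omega
    have hb4 : y' / 2 < 2 ^ n := by omega
    obtain ⟨h1, h2⟩ := ih hb hb2 hb3 hb4 heq
    omega

lemma morton_split (k ω x y : ℕ) (h : k ≤ ω) :
    morton ω x y = morton k (x % 2^k) (y % 2^k) + 4^k * morton (ω - k) (x / 2^k) (y / 2^k) := by
  induction k generalizing ω x y with
  | zero => simp [morton_zero, morton_zero']
  | succ k ih =>
    obtain ⟨m, rfl⟩ : ∃ m, ω = m + 1 := ⟨ω - 1, by omega⟩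
    rw [morton_succ m x y, morton_succ k (x % 2^(k+1)) (y % 2^(k+1)),
      ih m (x/2) (y/2) (by omega)]
    have e1 : ∀ z : ℕ, z % 2^(k+1) % 2 = z % 2 := fun z =>
      Nat.mod_mod_of_dvd z (dvd_pow_self 2 (Nat.succ_ne_zero k))
    have e2 : ∀ z : ℕ, z % 2^(k+1) / 2 = z / 2 % 2^k := fun z => by
      rw [pow_succ, mul_comm, Nat.mod_mul_right_div_self]
    have e3 : ∀ z : ℕ, z / 2^(k+1) = z / 2 / 2^k := fun z => by
      rw [Nat.div_div_eq_div_mul, pow_succ, mul_comm]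
    have e4 : m + 1 - (k + 1) = m - k := by omega
    rw [e1, e1, e2, e2, e3, e3, e4]
    ring

theorem morton_cell_iff (ω k a b : ℕ) (hk : k ≤ ω)
    (ha : a < 2 ^ ω) (hb : b < 2 ^ ω) (hda : 2 ^ k ∣ a) (hdb : 2 ^ k ∣ b)
    (p : ℕ × ℕ) (hp1 : p.1 < 2 ^ ω) (hp2 : p.2 < 2 ^ ω) :
    (a ≤ p.1 ∧ p.1 < a + 2 ^ k ∧ b ≤ p.2 ∧ p.2 < b + 2 ^ k) ↔
      (morton ω a b ≤ morton ω p.1 p.2 ∧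
        morton ω p.1 p.2 < morton ω a b + 4 ^ k) := by
  obtain ⟨qa, rfl⟩ := hda
  obtain ⟨qb, rfl⟩ := hdb
  have h2 : (0:ℕ) < 2 ^ k := Nat.pow_pos (by norm_num)
  have h4 : (0:ℕ) < 4 ^ k := Nat.pow_pos (by norm_num)
  have hpow : 2 ^ k * 2 ^ (ω - k) = 2 ^ ω := by rw [← pow_add]; congr 1; omega
  set M := morton (ω - k) (p.1 / 2^k) (p.2 / 2^k) with hM
  set H := morton (ω - k) qa qb with hH
  set L := morton k (p.1 % 2^k) (p.2 % 2^k) with hL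
  have hLlt : L < 4 ^ k := morton_lt _ _ _
  have hab : morton ω (2^k * qa) (2^k * qb) = 4 ^ k * H := by
    rw [morton_split k ω _ _ hk, Nat.mul_mod_right, Nat.mul_mod_right,
      Nat.mul_div_cancel_left _ h2, Nat.mul_div_cancel_left _ h2, morton_zero', zero_add]
  have hpm : morton ω p.1 p.2 = L + 4 ^ k * M := morton_split k ω _ _ hk
  have hd1 : p.1 / 2^k < 2 ^ (ω - k) := Nat.div_lt_of_lt_mul (by rw [hpow]; exact hp1)
  have hd2 : p.2 / 2^k < 2 ^ (ω - k) := Nat.div_lt_of_lt_mul (by rw [hpow]; exact hp2)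
  have hqa : qa < 2 ^ (ω - k) := by
    by_contra hc
    push_neg at hc
    have := Nat.mul_le_mul_left (2^k) hc
    omega
  have hqb : qb < 2 ^ (ω - k) := by
    by_contra hc
    push_neg at hc
    have := Nat.mul_le_mul_left (2^k) hc
    omega
  have key1 : (2^k * qa ≤ p.1 ∧ p.1 < 2^k * qa + 2^k) ↔ p.1 / 2^k = qa := by
    constructor
    · rintro ⟨u, v⟩
      have h1' : qa ≤ p.1 / 2^k := (Nat.le_div_iff_mul_le h2).mpr (by rw [mul_comm]; exact u)
      have h2' : p.1 / 2^k < qa + 1 := (Nat.div_lt_iff_lt_mul h2).mpr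
        (by have e : (qa+1) * 2^k = 2^k * qa + 2^k := by ring
            omega)
      omega
    · rintro rfl
      have := Nat.div_add_mod p.1 (2^k)
      have := Nat.mod_lt p.1 h2
      omega
  have key2 : (2^k * qb ≤ p.2 ∧ p.2 < 2^k * qb + 2^k) ↔ p.2 / 2^k = qb := by
    constructor
    · rintro ⟨u, v⟩
      have h1' : qb ≤ p.2 / 2^k := (Nat.le_div_iff_mul_le h2).mpr (by rw [mul_comm]; exact u)
      have h2' : p.2 / 2^k < qb + 1 := (Nat.div_lt_iff_lt_mul h2).mpr
        (by have e : (qb+1) * 2^k = 2^k * qb + 2^k := by ring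
            omega)
      omega
    · rintro rfl
      have := Nat.div_add_mod p.2 (2^k)
      have := Nat.mod_lt p.2 h2
      omega
  have key3 : (4^k * H ≤ L + 4^k * M ∧ L + 4^k * M < 4^k * H + 4^k) ↔ M = H := by
    constructor
    · rintro ⟨u, v⟩
      rcases lt_trichotomy M H with hlt | heq | hgt
      · have h5 : 4^k * (M + 1) ≤ 4^k * H := Nat.mul_le_mul_left (4^k) hlt
        have e : 4^k * (M + 1) = 4^k * M + 4^k := by ring
        omega
      · exact heq
      · have h5 : 4^k * (H + 1) ≤ 4^k * M := Nat.mul_le_mul_left (4^k) hgt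
        have e : 4^k * (H + 1) = 4^k * H + 4^k := by ring
        omega
    · intro h
      rw [h]
      omega
  have key4 : M = H ↔ (p.1 / 2^k = qa ∧ p.2 / 2^k = qb) := by
    constructor
    · exact fun h => morton_inj hd1 hd2 hqa hqb h
    · rintro ⟨e1, e2⟩; rw [hM, e1, e2]
  rw [hab, hpm]
  constructor
  · rintro ⟨u1, u2, u3, u4⟩
    exact key3.mpr (key4.mpr ⟨key1.mp ⟨u1, u2⟩, key2.mp ⟨u3, u4⟩⟩)
  · rintro ⟨u1, u2⟩
    obtain ⟨e1, e2⟩ := key4.mp (key3.mp ⟨u1, u2⟩)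
    obtain ⟨v1, v2⟩ := key1.mpr e1
    obtain ⟨v3, v4⟩ := key2.mpr e2
    exact ⟨v1, v2, v3, v4⟩
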